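/- Let k be a perfect field of prime characteristic p, let R = k[x₁,…,x_d], and let f ∈ R be a nonzero homogeneous polynomial. Then f has level one if and only if there exists an exponent vector α with every entry at most p−1 such that the monomial x^α appears with nonzero coefficient in the expansion of f^{p−1}. -/

import Mathlib

open MvPolynomial

/-- `J^[q]`: the ideal generated by the `q`-th powers of the elements of `J`. -/
def bracketPow {R : Type*} [CommRing R] (q : ℕ) (J : Ideal R) : Ideal R :=
  Ideal.span ((fun a => a ^ q) '' (J : Set R))

/-- `I_e(g)` (for the prime `p`): the smallest ideal `J` with `g ∈ J^[p^e]`. -/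
def rootIdeal {R : Type*} [CommRing R] (p e : ℕ) (g : R) : Ideal R :=
  sInf {J : Ideal R | g ∈ bracketPow (p ^ e) J}

/-- `f` has level `e`: `e` is the least integer `≥ 1` such that
`f^(p^e - p) ∈ (I_e(f^(p^e - 1)))^[p^e]`. -/
def HasLevel {R : Type*} [CommRing R] (p : ℕ) (f : R) (e : ℕ) : Prop :=
  IsLeast {e' : ℕ | 1 ≤ e' ∧
    f ^ (p ^ e' - p) ∈ bracketPow (p ^ e') (rootIdeal p e' (f ^ (p ^ e' - 1)))} e

namespace Stmt11Aux

lemma bracketPow_le {R : Type*} [CommRing R] {q : ℕ} (hq : 0 < q) (J : Ideal R) :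
    bracketPow q J ≤ J := by
  rw [bracketPow, Ideal.span_le]
  rintro _ ⟨a, ha, rfl⟩
  exact J.pow_mem_of_mem ha q hq

lemma one_mem_bracketPow_iff {R : Type*} [CommRing R] {q : ℕ} (hq : 0 < q) (J : Ideal R) :
    (1 : R) ∈ bracketPow q J ↔ J = ⊤ := by
  constructor
  · intro h
    exact (Ideal.eq_top_iff_one J).2 (bracketPow_le hq J h)
  · rintro rfl
    exact Ideal.subset_span ⟨1, trivial, one_pow q⟩

variable {p : ℕ} [Fact p.Prime] {k : Type*} [Field k] [CharP k p] [PerfectField k] {d : ℕ}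

/-- the inverse "partial division" of `δ ↦ p • δ + α`. -/
noncomputable def unshift (p : ℕ) (α δ : Fin d →₀ ℕ) : Fin d →₀ ℕ :=
  Finsupp.zipWith (fun a b => (a - b) / p) (by simp) δ α

lemma unshift_shift (hp : 0 < p) (α γ : Fin d →₀ ℕ) : unshift p α (p • γ + α) = γ := by
  ext i
  simp only [unshift, Finsupp.zipWith_apply, Finsupp.add_apply, Finsupp.smul_apply,
    smul_eq_mul, Nat.add_sub_cancel]
  exact Nat.mul_div_cancel_left _ hp

variable (p) in
/-- Cartier-type operator: `coeff γ (Cop p α b) = (coeff (p•γ+α) b)^(1/p)`. -/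
noncomputable def Cop (α : Fin d →₀ ℕ) (b : MvPolynomial (Fin d) k) :
    MvPolynomial (Fin d) k :=
  ∑ δ ∈ b.support, if p • unshift p α δ + α = δ then
    monomial (unshift p α δ) ((frobeniusEquiv k p).symm (coeff δ b)) else 0

lemma coeff_Cop (α γ : Fin d →₀ ℕ) (b : MvPolynomial (Fin d) k) :
    coeff γ (Cop p α b) = (frobeniusEquiv k p).symm (coeff (p • γ + α) b) := by
  classical
  have hp : 0 < p := (Fact.out : p.Prime).pos
  rw [Cop, coeff_sum]
  have key : ∀ δ ∈ b.support,
      (coeff γ (if p • unshift p α δ + α = δ then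
        monomial (unshift p α δ) ((frobeniusEquiv k p).symm (coeff δ b)) else 0)) =
      if δ = p • γ + α then (frobeniusEquiv k p).symm (coeff δ b) else 0 := by
    intro δ _
    by_cases h : δ = p • γ + α
    · subst h
      rw [if_pos (by rw [unshift_shift hp]), if_pos rfl, unshift_shift hp, coeff_monomial,
        if_pos rfl]
    · rw [if_neg h]
      split_ifs with h1
      · rw [coeff_monomial]
        split_ifs with h2
        · exact absurd (by rw [← h2, h1]) h
        · rfl
      · exact coeff_zero _
  rw [Finset.sum_congr rfl key, Finset.sum_ite_eq']
  split_ifs with h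
  · rfl
  · rw [MvPolynomial.notMem_support_iff.mp h, map_zero]

lemma Cop_add (α : Fin d →₀ ℕ) (a b : MvPolynomial (Fin d) k) :
    Cop p α (a + b) = Cop p α a + Cop p α b := by
  ext γ
  simp [coeff_Cop, coeff_add]

variable (p) in
/-- `Cop p α` bundled as an additive monoid hom. -/
noncomputable def CopHom (α : Fin d →₀ ℕ) :
    MvPolynomial (Fin d) k →+ MvPolynomial (Fin d) k :=
  AddMonoidHom.mk' (Cop p α) (Cop_add α)

lemma frobeniusEquiv_symm_pow_mul (c : k) (x : k) :
    (frobeniusEquiv k p).symm (c ^ p * x) = c * (frobeniusEquiv k p).symm x := by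
  rw [map_mul]
  congr 1
  rw [← frobenius_def, ← frobeniusEquiv_apply, RingEquiv.symm_apply_apply]

lemma smul_le_smul_add_iff {α γ u : Fin d →₀ ℕ} (hα : ∀ i, α i < p) :
    p • u ≤ p • γ + α ↔ u ≤ γ := by
  have hp : 0 < p := (Fact.out : p.Prime).pos
  rw [Finsupp.le_def, Finsupp.le_def]
  constructor
  · intro h i
    have := h i
    simp only [Finsupp.add_apply, Finsupp.smul_apply, smul_eq_mul] at this
    by_contra hc
    push_neg at hc
    have := hα i
    nlinarith
  · intro h i
    have := h i
    simp only [Finsupp.add_apply, Finsupp.smul_apply, smul_eq_mul]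
    nlinarith

lemma sub_shift {α γ u : Fin d →₀ ℕ} (h : u ≤ γ) :
    p • γ + α - p • u = p • (γ - u) + α := by
  ext i
  have hi := (Finsupp.le_def.mp h) i
  simp only [Finsupp.tsub_apply, Finsupp.add_apply, Finsupp.smul_apply, smul_eq_mul]
  have h2 : p * (γ i - u i) = p * γ i - p * u i := Nat.mul_sub p _ _
  have h3 : p * u i ≤ p * γ i := Nat.mul_le_mul_left p hi
  omega

lemma Cop_pow_mul (α : Fin d →₀ ℕ) (hα : ∀ i, α i < p) (h b : MvPolynomial (Fin d) k) :
    Cop p α (h ^ p * b) = h * Cop p α b := by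
  induction h using MvPolynomial.induction_on' with
  | monomial u a =>
    ext γ
    rw [coeff_Cop, monomial_pow, coeff_monomial_mul', coeff_monomial_mul']
    by_cases hle : u ≤ γ
    · rw [if_pos ((smul_le_smul_add_iff hα).2 hle), if_pos hle, sub_shift hle,
        frobeniusEquiv_symm_pow_mul, coeff_Cop]
    · rw [if_neg (fun hc => hle ((smul_le_smul_add_iff hα).1 hc)), if_neg hle, map_zero]
  | add q r hq hr =>
    rw [add_pow_char, add_mul, Cop_add, hq, hr, add_mul]

lemma Cop_mem_of_mem_bracketPow (α : Fin d →₀ ℕ) (hα : ∀ i, α i < p)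
    {J : Ideal (MvPolynomial (Fin d) k)} {g : MvPolynomial (Fin d) k}
    (hg : g ∈ bracketPow p J) : Cop p α g ∈ J := by
  rw [bracketPow] at hg
  obtain ⟨c, hsup, hsum⟩ := Submodule.mem_span_set.mp hg
  have : Cop p α g = Cop p α (c.sum fun mi r => r • mi) := by rw [hsum]
  rw [this, Finsupp.sum]
  have : Cop p α (∑ mi ∈ c.support, c mi • mi) =
      ∑ mi ∈ c.support, Cop p α (c mi • mi) := map_sum (CopHom p α) _ _
  rw [this]
  apply Ideal.sum_mem
  intro mi hmi
  obtain ⟨a, haJ, hamk⟩ := hsup hmi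
  have : c mi • mi = a ^ p * c mi := by
    rw [← hamk]; rw [smul_eq_mul, mul_comm]
  rw [this, Cop_pow_mul α hα]
  exact Ideal.mul_mem_right _ _ haJ

lemma degree_eq_sum_univ (δ : Fin d →₀ ℕ) : δ.degree = ∑ i : Fin d, δ i :=
  Finset.sum_subset (Finset.subset_univ _)
    (fun i _ hi => Finsupp.notMem_support_iff.mp hi)

end Stmt11Aux

open Stmt11Aux in
/-- A nonzero homogeneous polynomial `f` has level one if and only if some monomial `x^α`
with all exponents at most `p - 1` occurs with nonzero coefficient in `f^(p-1)`. -/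
theorem stmt_11 (p : ℕ) [Fact p.Prime] (k : Type*) [Field k] [CharP k p] [PerfectField k]
    (d : ℕ) (f : MvPolynomial (Fin d) k) (hf : f ≠ 0)
    (m : ℕ) (hhom : f.IsHomogeneous m) :
    HasLevel p f 1 ↔
      ∃ α : Fin d →₀ ℕ, (∀ i, α i ≤ p - 1) ∧ coeff α (f ^ (p - 1)) ≠ 0 := by
  classical
  have hp : p.Prime := Fact.out
  have hp1 : 0 < p := hp.pos
  set g : MvPolynomial (Fin d) k := f ^ (p - 1) with hg
  -- Step 1: rewrite HasLevel p f 1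
  have key : HasLevel p f 1 ↔
      ∀ J : Ideal (MvPolynomial (Fin d) k), g ∈ bracketPow p J → J = ⊤ := by
    have e1 : p ^ 1 = p := pow_one p
    have hmem : (1 : ℕ) ∈ {e' : ℕ | 1 ≤ e' ∧
        f ^ (p ^ e' - p) ∈ bracketPow (p ^ e') (rootIdeal p e' (f ^ (p ^ e' - 1)))} ↔
        (1 : MvPolynomial (Fin d) k) ∈ bracketPow p (rootIdeal p 1 g) := by
      simp only [Set.mem_setOf_eq, le_refl, true_and, e1, Nat.sub_self, pow_zero, hg]
    constructor
    · intro h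
      have h1 := h.1
      rw [hmem] at h1
      have := (one_mem_bracketPow_iff hp1 _).1 h1
      rw [rootIdeal, e1, sInf_eq_top] at this
      exact fun J hJ => this J hJ
    · intro h
      constructor
      · rw [hmem, one_mem_bracketPow_iff hp1, rootIdeal, e1, sInf_eq_top]
        exact fun J hJ => h J hJ
      · exact fun e' he' => he'.1
  rw [key]
  constructor
  · -- level one → small monomial exists
    intro h
    by_contra hcon
    push_neg at hcon
    -- every monomial of g has some exponent ≥ p, so g ∈ m^[p] for the irrelevant ideal
    set mI : Ideal (MvPolynomial (Fin d) k) :=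
      Ideal.span (Set.range (X : Fin d → MvPolynomial (Fin d) k)) with hmI
    have hgm : g ∈ bracketPow p mI := by
      rw [← support_sum_monomial_coeff g]
      apply Ideal.sum_mem
      intro δ hδ
      have hne : coeff δ g ≠ 0 := MvPolynomial.mem_support_iff.mp hδ
      have : ¬ (∀ i, δ i ≤ p - 1) := fun hall => hne (hcon δ hall)
      push_neg at this
      obtain ⟨i, hi⟩ := this
      have hip : p ≤ δ i := by omega
      have hXp : (X i : MvPolynomial (Fin d) k) ^ p ∈
          ((fun a => a ^ p) '' (mI : Set (MvPolynomial (Fin d) k))) :=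
        ⟨X i, Ideal.subset_span ⟨i, rfl⟩, rfl⟩
      have hsplit : (monomial δ) (coeff δ g) =
          (X i : MvPolynomial (Fin d) k) ^ p *
            monomial (δ - Finsupp.single i p) (coeff δ g) := by
        have hδeq : Finsupp.single i p + (δ - Finsupp.single i p) = δ := by
          ext j
          simp only [Finsupp.add_apply, Finsupp.tsub_apply, Finsupp.single_apply]
          by_cases hji : i = j
          · subst hji; simp only [if_pos rfl, if_true, eq_self_iff_true]; omega
          · simp only [if_neg hji]; omega
        rw [X_pow_eq_monomial, monomial_mul, one_mul, hδeq]
      rw [hsplit]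
      exact Ideal.mul_mem_right _ _ (Ideal.subset_span hXp)
    have := h mI hgm
    -- but mI ≠ ⊤
    have hker : mI ≤ RingHom.ker (constantCoeff (σ := Fin d) (R := k)) := by
      rw [hmI, Ideal.span_le]
      rintro _ ⟨i, rfl⟩
      rw [SetLike.mem_coe, RingHom.mem_ker]
      exact constantCoeff_X k i
    have h1 : (1 : MvPolynomial (Fin d) k) ∈ mI := this ▸ Submodule.mem_top
    have := hker h1
    rw [RingHom.mem_ker, map_one] at this
    exact one_ne_zero this
  · -- small monomial exists → level one
    rintro ⟨β, hβ, hcoeff⟩ J hJ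
    have hβ' : ∀ i, β i < p := fun i => by have := hβ i; omega
    have hu : Cop p β g ∈ J := Cop_mem_of_mem_bracketPow β hβ' hJ
    set u := Cop p β g with hudef
    -- g is homogeneous of degree m * (p-1)
    have hghom : g.IsHomogeneous (m * (p - 1)) := hhom.pow (p - 1)
    have hdeg : ∀ γ : Fin d →₀ ℕ, coeff γ g ≠ 0 → γ.degree = m * (p - 1) := by
      intro γ hγ
      by_contra hne
      exact hγ (hghom.coeff_eq_zero hne)
    have hu0 : coeff 0 u ≠ 0 := by
      rw [hudef, coeff_Cop, smul_zero, zero_add]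
      simp only [ne_eq, EmbeddingLike.map_eq_zero_iff]
      exact hcoeff
    have huγ : ∀ γ : Fin d →₀ ℕ, γ ≠ 0 → coeff γ u = 0 := by
      intro γ hγ
      rw [hudef, coeff_Cop]
      have hzero : coeff (p • γ + β) g = 0 := by
        by_contra hne
        have h1 : (p • γ + β).degree = m * (p - 1) := hdeg _ hne
        have h2 : β.degree = m * (p - 1) := hdeg _ hcoeff
        rw [degree_eq_sum_univ] at h1
        rw [degree_eq_sum_univ] at h2
        have hsum : ∑ i : Fin d, (p * γ i + β i) = ∑ i : Fin d, β i := by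
          calc ∑ i : Fin d, (p * γ i + β i)
              = ∑ i : Fin d, (p • γ + β) i := by
                apply Finset.sum_congr rfl
                intro i _
                simp [Finsupp.add_apply, Finsupp.smul_apply, mul_comm]
            _ = ∑ i : Fin d, β i := by rw [h1, h2]
        rw [Finset.sum_add_distrib] at hsum
        have : ∑ i : Fin d, p * γ i = 0 := by omega
        have hall : ∀ i ∈ Finset.univ, p * γ i = 0 :=
          (Finset.sum_eq_zero_iff).mp this
        apply hγ
        ext i
        have hmi := hall i (Finset.mem_univ i)
        simp only [Finsupp.coe_zero, Pi.zero_apply]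
        exact (Nat.mul_eq_zero.mp hmi).resolve_left (by omega)
      rw [hzero, map_zero]
    -- u is a nonzero constant, hence a unit in J
    have huC : u = C (coeff 0 u) := by
      ext γ
      rw [coeff_C]
      by_cases hγ0 : γ = 0
      · subst hγ0; rw [if_pos rfl]
      · rw [if_neg (fun h => hγ0 h.symm), huγ γ hγ0]
    obtain ⟨c, hc0, hcu⟩ : ∃ c : k, c ≠ 0 ∧ u = C c := ⟨coeff 0 u, hu0, huC⟩
    rw [Ideal.eq_top_iff_one]
    have hone : (1 : MvPolynomial (Fin d) k) = C c⁻¹ * u := by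
      rw [hcu, ← C_mul, inv_mul_cancel₀ hc0, C_1]
    rw [hone]
    exact Ideal.mul_mem_left _ _ hu
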